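/- If n₁/N₁ = n₂/N₂ with N₁, N₂, n₁, n₂ > 0, then x = y = n₁/N₁ solves the system x(N₁ - n₁) + y·n₁ = n₁ and x(N₂ - n₂) + y·n₂ = n₂; moreover, the solution set is infinite (there exist infinitely many pairs (x, y) solving the system). -/

import Mathlib

theorem stmt_3 (N₁ N₂ n₁ n₂ : ℝ)
    (hN₁ : 0 < N₁) (hN₂ : 0 < N₂) (hn₁ : 0 < n₁) (hn₂ : 0 < n₂)
    (hbr : n₁ / N₁ = n₂ / N₂) :
    ((n₁ / N₁) * (N₁ - n₁) + (n₁ / N₁) * n₁ = n₁ ∧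
      (n₁ / N₁) * (N₂ - n₂) + (n₁ / N₁) * n₂ = n₂) ∧
    {p : ℝ × ℝ | p.1 * (N₁ - n₁) + p.2 * n₁ = n₁ ∧
      p.1 * (N₂ - n₂) + p.2 * n₂ = n₂}.Infinite := by
  have hcross : n₁ * N₂ = n₂ * N₁ := by
    field_simp at hbr
    linarith
  constructor
  · constructor
    · field_simp
      ring
    · field_simp
      nlinarith [hcross]
  · apply Set.infinite_of_injective_forall_mem
      (f := fun t : ℝ => (t, (n₁ - t * (N₁ - n₁)) / n₁))
    · intro a b hab
      simpa using congrArg Prod.fst hab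
    · intro t
      constructor
      · field_simp
        ring
      · have h2 : t * (N₂ - n₂) + ((n₁ - t * (N₁ - n₁)) / n₁) * n₂ = n₂ := by
          field_simp
          linear_combination t * hcross
        exact h2
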